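/- There exists a universal constant C such that the following holds for S = 𝖱 and for S = 𝖱⁺. For every d ≥ 0 and all coefficients a₀, a₁, …, a_d ∈ S, there exists a (weakest) width-2 ABP over S in the single variable x, of length at most C · (d + 1), computing the function S → S that maps x to min_{0 ≤ i ≤ d} ( a_i + i·x ) (arithmetic in ℝ ∪ {∞}, respectively ℝ≥0 ∪ {∞}, with ∞ absorbing). That is, every univariate min-plus polynomial of degree d is computable by a weakest width-2 ABP of size O(d). -/

import Mathlib

open MvPolynomial

/-- `𝖱`: the min-plus semiring on `ℝ ∪ {∞}`. -/
abbrev TR : Type := Tropical (WithTop ℝ)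

/-- `𝖱⁺`: the min-plus semiring on `ℝ≥0 ∪ {∞}`. -/
abbrev TRP : Type := Tropical (WithTop NNReal)

/-- In a (weakest) ABP every matrix entry is a single variable or a constant. -/
def IsABP {S V : Type} [CommSemiring S] {w L : ℕ}
    (M : Fin L → Matrix (Fin w) (Fin w) (MvPolynomial V S)) : Prop :=
  ∀ l i j, (∃ v, M l i j = X v) ∨ (∃ c, M l i j = C c)

/-- The function computed by a (weakest) width-`w` ABP: the evaluation at an
assignment of the `(1,1)`-entry of the min-plus matrix product `M₁ ⋯ M_L`. -/
noncomputable def ABPeval {S V : Type} [CommSemiring S] {w L : ℕ} [NeZero w]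
    (M : Fin L → Matrix (Fin w) (Fin w) (MvPolynomial V S)) (a : V → S) : S :=
  eval a ((List.ofFn M).prod 0 0)

section Aux
variable {S : Type} [CommSemiring S]

noncomputable def Amat (c : S) : Matrix (Fin 2) (Fin 2) (MvPolynomial Unit S) :=
  !![X (), C c; 0, 1]

noncomputable def Fmat (S : Type) [CommSemiring S] :
    Matrix (Fin 2) (Fin 2) (MvPolynomial Unit S) :=
  !![0, 0; 1, 0]

noncomputable def Ppoly : List S → MvPolynomial Unit S
  | [] => 0
  | c :: t => C c + X () * Ppoly t

lemma prod_Amat (l : List S) :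
    (l.map Amat).prod = !![X () ^ l.length, Ppoly l; 0, 1] := by
  induction l with
  | nil => simp [Ppoly, Matrix.one_fin_two]
  | cons c t ih =>
    rw [List.map_cons, List.prod_cons, ih, Amat, Matrix.mul_fin_two]
    ext i j
    fin_cases i <;> fin_cases j <;> simp [Ppoly, pow_succ] <;> ring

lemma eval_Ppoly (x : S) : ∀ {d : ℕ} (a : Fin (d + 1) → S),
    eval (fun _ => x) (Ppoly (List.ofFn a)) = ∑ i : Fin (d + 1), a i * x ^ (i : ℕ) := by
  intro d
  induction d with
  | zero => intro a; simp [Ppoly, List.ofFn_succ]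
  | succ d ih =>
    intro a
    rw [List.ofFn_succ]
    show eval _ (C (a 0) + X () * Ppoly (List.ofFn fun i => a i.succ)) = _
    rw [Fin.sum_univ_succ]
    simp only [map_add, map_mul, eval_C, eval_X, ih fun i => a i.succ, Finset.mul_sum]
    simp [pow_succ, Fin.val_succ]
    ring_nf

lemma generic (d : ℕ) (a : Fin (d + 1) → S) :
    ∃ L : ℕ, L ≤ 2 * (d + 1) ∧
      ∃ M : Fin L → Matrix (Fin 2) (Fin 2) (MvPolynomial Unit S),
        IsABP M ∧
        ∀ x : S, ABPeval M (fun _ => x) = ∑ i : Fin (d + 1), a i * x ^ (i : ℕ) := by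
  refine ⟨d + 2, by omega, Fin.snoc (fun i => Amat (a i)) (Fmat S), ?_, ?_⟩
  · intro l i j
    refine Fin.lastCases ?_ ?_ l
    · fin_cases i <;> fin_cases j
      · exact Or.inr ⟨0, by simp [Fmat, Fin.snoc_last]⟩
      · exact Or.inr ⟨0, by simp [Fmat, Fin.snoc_last]⟩
      · exact Or.inr ⟨1, by simp [Fmat, Fin.snoc_last]⟩
      · exact Or.inr ⟨0, by simp [Fmat, Fin.snoc_last]⟩
    · intro k
      fin_cases i <;> fin_cases j
      · exact Or.inl ⟨(), by simp [Amat, Fin.snoc_castSucc]⟩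
      · exact Or.inr ⟨a k, by simp [Amat, Fin.snoc_castSucc]⟩
      · exact Or.inr ⟨0, by simp [Amat, Fin.snoc_castSucc]⟩
      · exact Or.inr ⟨1, by simp [Amat, Fin.snoc_castSucc]⟩
  · intro x
    unfold ABPeval
    have h1 : List.ofFn (Fin.snoc (fun i : Fin (d+1) => Amat (a i)) (Fmat S))
        = ((List.ofFn a).map Amat) ++ [Fmat S] := by
      rw [List.ofFn_succ', List.concat_eq_append, List.map_ofFn]
      congr 1
      · congr 1
        funext i
        simp [Fin.snoc_castSucc]
      · simp [Fin.snoc_last]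
    rw [h1, List.prod_append, List.prod_singleton, prod_Amat]
    have h2 := eval_Ppoly x a
    set P := Ppoly (List.ofFn a) with hP
    simp [Fmat, Matrix.mul_apply, Fin.sum_univ_two, h2]

end Aux

/-- there is a universal constant `C` such that, over `S = 𝖱` and
over `S = 𝖱⁺`, every univariate min-plus polynomial
`x ↦ min_{0 ≤ i ≤ d} (aᵢ + i·x)` (in tropical notation `∑ i, aᵢ * x ^ i`) of
degree `d` is computed by a weakest width-2 ABP (in the single variable,
`V = Unit`) of length at most `C · (d + 1)`. -/
theorem stmt12 : ∃ C : ℕ,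
    (∀ (d : ℕ) (a : Fin (d + 1) → TR),
      ∃ L : ℕ, L ≤ C * (d + 1) ∧
        ∃ M : Fin L → Matrix (Fin 2) (Fin 2) (MvPolynomial Unit TR),
          IsABP M ∧
          ∀ x : TR, ABPeval M (fun _ => x) = ∑ i : Fin (d + 1), a i * x ^ (i : ℕ)) ∧
    (∀ (d : ℕ) (a : Fin (d + 1) → TRP),
      ∃ L : ℕ, L ≤ C * (d + 1) ∧
        ∃ M : Fin L → Matrix (Fin 2) (Fin 2) (MvPolynomial Unit TRP),
          IsABP M ∧
          ∀ x : TRP, ABPeval M (fun _ => x) = ∑ i : Fin (d + 1), a i * x ^ (i : ℕ)) := by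
  exact ⟨2, fun d a => generic d a, fun d a => generic d a⟩
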